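/- Let n be a positive integer and w, d ∈ ℝⁿ. Let w⁺ᵢ = max(wᵢ, 0) and w⁻ᵢ = min(wᵢ, 0). Let p ∈ {0,1}ⁿ satisfy (pᵢ = 1 ⟹ wᵢ > 0) and q ∈ {−1,0}ⁿ satisfy (qᵢ = −1 ⟹ wᵢ < 0). Then for all α, β ∈ ℝ: (1/2)·Σᵢ dᵢ(α pᵢ + β qᵢ − wᵢ)² = (1/2)·Σᵢ dᵢ(α pᵢ − w⁺ᵢ)² + (1/2)·Σᵢ dᵢ(β qᵢ − w⁻ᵢ)². (The separation identity (equation (14)) in the proof of Proposition 4: the two-scaling ternarization objective splits into independent problems over positive and negative parts of w.) -/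

import Mathlib

/-- Separation identity (equation (14)) in the proof of Proposition 4: with
`w⁺ i = max (w i) 0`, `w⁻ i = min (w i) 0`, an indicator `p ∈ {0,1}ⁿ` supported on
positive entries of `w` and a negated indicator `q ∈ {−1,0}ⁿ` supported on negative
entries of `w`, the two-scaling ternarization objective splits into independent
problems over the positive and negative parts of `w`. -/
theorem stmt_10 (n : ℕ) (hn : 0 < n) (w d : Fin n → ℝ)
    (wpos wneg : Fin n → ℝ)
    (hwpos : ∀ i, wpos i = max (w i) 0) (hwneg : ∀ i, wneg i = min (w i) 0)
    (p : Fin n → ℝ) (hp : ∀ i, p i ∈ ({0, 1} : Set ℝ))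
    (hpw : ∀ i, p i = 1 → 0 < w i)
    (q : Fin n → ℝ) (hq : ∀ i, q i ∈ ({-1, 0} : Set ℝ))
    (hqw : ∀ i, q i = -1 → w i < 0) :
    ∀ α β : ℝ,
      (1/2) * ∑ i, d i * (α * p i + β * q i - w i)^2
        = (1/2) * (∑ i, d i * (α * p i - wpos i)^2)
          + (1/2) * ∑ i, d i * (β * q i - wneg i)^2 := by
  intro α β
  rw [← mul_add, ← Finset.sum_add_distrib]
  congr 1
  apply Finset.sum_congr rfl
  intro i _
  rw [← mul_add]
  congr 1
  rcases hp i with hp0 | hp1 <;> rcases hq i with hq1 | hq0 <;>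
    (try simp only [Set.mem_singleton_iff] at *)
  · -- p = 0, q = -1 : w < 0
    have hw := hqw i hq1
    rw [hwpos i, hwneg i, hp0, hq1, max_eq_right hw.le, min_eq_left hw.le]
    ring
  · -- p = 0, q = 0
    rw [hwpos i, hwneg i, hp0, hq0]
    rcases le_or_gt (w i) 0 with h | h
    · rw [max_eq_right h, min_eq_left h]; ring
    · rw [max_eq_left h.le, min_eq_right h.le]; ring
  · -- p = 1, q = -1 : contradiction
    exact absurd (hqw i hq1) (hpw i hp1).asymm
  · -- p = 1, q = 0 : w > 0
    have hw := hpw i hp1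
    rw [hwpos i, hwneg i, hp1, hq0, max_eq_left hw.le, min_eq_right hw.le]
    ring
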